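/- Let α ≥ 0, γ ≥ 1 be real and β ∈ ℂ with γ+α > |β|. Then for all z in the open unit disc, the derivative of the normalized Rabotnov function satisfies |𝓡'_{α,β,γ}(z)| ≤ (γ+α+|β|)/(γ+α−|β|). -/

import Mathlib

open Complex

noncomputable def rabA (α γ : ℝ) (β : ℂ) (n : ℕ) : ℂ :=
  β ^ n * (Real.Gamma (γ + α) : ℂ) / (Real.Gamma ((γ + α) * (n + 1)) : ℂ)

noncomputable def rab (α γ : ℝ) (β : ℂ) (z : ℂ) : ℂ :=
  z + ∑' k : ℕ, rabA α γ β (k + 1) * z ^ (k + 2)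

noncomputable def rabPartial (α γ : ℝ) (β : ℂ) (m : ℕ) (z : ℂ) : ℂ :=
  z + ∑ k ∈ Finset.range m, rabA α γ β (k + 1) * z ^ (k + 2)

noncomputable def rabD (α γ : ℝ) (β : ℂ) (z : ℂ) : ℂ :=
  1 + ∑' k : ℕ, ((k : ℂ) + 2) * rabA α γ β (k + 1) * z ^ (k + 1)

noncomputable def rabDPartial (α γ : ℝ) (β : ℂ) (m : ℕ) (z : ℂ) : ℂ :=
  1 + ∑ k ∈ Finset.range m, ((k : ℂ) + 2) * rabA α γ β (k + 1) * z ^ (k + 1)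

noncomputable def rabAlex (α γ : ℝ) (β : ℂ) (z : ℂ) : ℂ :=
  z + ∑' k : ℕ, rabA α γ β (k + 1) / ((k : ℂ) + 2) * z ^ (k + 2)

noncomputable def rabAlexPartial (α γ : ℝ) (β : ℂ) (m : ℕ) (z : ℂ) : ℂ :=
  z + ∑ k ∈ Finset.range m, rabA α γ β (k + 1) / ((k : ℂ) + 2) * z ^ (k + 2)



lemma gamma_mono {x y : ℝ} (hx : 2 ≤ x) (hxy : x ≤ y) : Real.Gamma x ≤ Real.Gamma y :=
  Real.Gamma_strictMonoOn_Ici.monotoneOn hx (le_trans hx hxy) hxy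

lemma gamma_lb (c : ℝ) (hc : 1 ≤ c) (n : ℕ) :
    c ^ (n+1) * (n+1).factorial * Real.Gamma c ≤ Real.Gamma (c * (n + 2)) := by
  have hc0 : 0 < c := lt_of_lt_of_le one_pos hc
  have hΓc : 0 < Real.Gamma c := Real.Gamma_pos_of_pos hc0
  induction n with
  | zero =>
    have h1 : Real.Gamma (c + 1) ≤ Real.Gamma (c * (0 + 2)) := by
      apply gamma_mono (by linarith) (by linarith)
    rw [Real.Gamma_add_one hc0.ne'] at h1
    simpa using h1
  | succ n ih =>
    have hn : (0:ℝ) ≤ (n:ℝ) := Nat.cast_nonneg n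
    have key : Real.Gamma (c * ((n:ℝ)+2) + 1) ≤ Real.Gamma (c * ((n:ℝ) + 1 + 2)) := by
      apply gamma_mono (by nlinarith) (by nlinarith)
    rw [Real.Gamma_add_one (by positivity)] at key
    have h2 : c * ((n:ℝ)+2) * (c ^ (n+1) * (n+1).factorial * Real.Gamma c)
        ≤ c * ((n:ℝ)+2) * Real.Gamma (c * ((n:ℝ)+2)) :=
      mul_le_mul_of_nonneg_left ih (by positivity)
    have e : (c:ℝ) ^ (n+1+1) * ((n+1+1).factorial : ℝ) * Real.Gamma c
        = c * ((n:ℝ)+2) * (c ^ (n+1) * (n+1).factorial * Real.Gamma c) := by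
      rw [Nat.factorial_succ]; push_cast; ring
    push_cast at e ⊢
    linarith


theorem rabD_bound (α γ : ℝ) (β : ℂ) (hα : 0 ≤ α) (hγ : 1 ≤ γ)
    (hβ : ‖β‖ < γ + α) (z : ℂ) (hz : ‖z‖ < 1) :
    ‖rabD α γ β z‖ ≤
      (γ + α + ‖β‖) / (γ + α - ‖β‖) := by
  set c : ℝ := γ + α with hc_def
  set b : ℝ := ‖β‖ with hb_def
  have hc1 : 1 ≤ c := by simp only [hc_def]; linarith
  have hc0 : 0 < c := lt_of_lt_of_le one_pos hc1
  have hb0 : 0 ≤ b := norm_nonneg β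
  have hΓc : 0 < Real.Gamma c := Real.Gamma_pos_of_pos hc0
  have hz0 : 0 ≤ ‖z‖ := norm_nonneg z
  set r : ℝ := b / c with hr_def
  have hr0 : 0 ≤ r := div_nonneg hb0 hc0.le
  have hr1 : r < 1 := (div_lt_one hc0).mpr hβ
  -- termwise bound
  have hterm : ∀ k : ℕ,
      ‖((k : ℂ) + 2) * rabA α γ β (k + 1) * z ^ (k + 1)‖ ≤ 2 * r ^ (k + 1) := by
    intro k
    have hΓn : 0 < Real.Gamma (c * ((k:ℝ) + 2)) :=
      Real.Gamma_pos_of_pos (by positivity)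
    have habsA : ‖rabA α γ β (k + 1)‖
        = b ^ (k+1) * Real.Gamma c / Real.Gamma (c * ((k:ℝ) + 2)) := by
      have e : (γ + α) * (((k+1 : ℕ) : ℝ) + 1) = c * ((k:ℝ)+2) := by push_cast; ring
      rw [rabA, e, norm_div, norm_mul, norm_pow]
      simp only [Complex.norm_real, Real.norm_eq_abs]
      rw [abs_of_pos hΓc, abs_of_pos hΓn]
    rw [norm_mul, norm_mul, norm_pow, habsA]
    have h1 : ‖(k:ℂ) + 2‖ = (k:ℝ) + 2 := by
      rw [show ((k:ℂ) + 2) = (((k:ℝ) + 2 : ℝ) : ℂ) by push_cast; ring, Complex.norm_real, Real.norm_eq_abs]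
      exact abs_of_nonneg (by positivity)
    rw [h1]
    have hglb := gamma_lb c hc1 k
    have hfac : ((k:ℝ) + 2) ≤ 2 * ((k+1).factorial : ℝ) := by
      have := Nat.self_le_factorial (k+1)
      have h' : ((k:ℝ) + 1) ≤ ((k+1).factorial : ℝ) := by exact_mod_cast this
      linarith
    have hA : b ^ (k+1) * Real.Gamma c / Real.Gamma (c * ((k:ℝ) + 2))
        ≤ b ^ (k+1) / (c ^ (k+1) * ((k+1).factorial : ℝ)) := by
      rw [div_le_div_iff₀ hΓn (by positivity)]
      calc b ^ (k+1) * Real.Gamma c * (c ^ (k+1) * ((k+1).factorial : ℝ))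
          = b ^ (k+1) * (c ^ (k+1) * ((k+1).factorial : ℝ) * Real.Gamma c) := by ring
        _ ≤ b ^ (k+1) * Real.Gamma (c * ((k:ℝ) + 2)) := by
            apply mul_le_mul_of_nonneg_left _ (by positivity)
            exact_mod_cast hglb
    calc ((k:ℝ) + 2) * (b ^ (k+1) * Real.Gamma c / Real.Gamma (c * ((k:ℝ) + 2))) * ‖z‖ ^ (k+1)
        ≤ ((k:ℝ) + 2) * (b ^ (k+1) / (c ^ (k+1) * ((k+1).factorial : ℝ))) * 1 := by
          apply mul_le_mul (mul_le_mul_of_nonneg_left hA (by positivity))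
            (pow_le_one₀ hz0 hz.le) (by positivity) (by positivity)
      _ ≤ 2 * ((k+1).factorial : ℝ) * (b ^ (k+1) / (c ^ (k+1) * ((k+1).factorial : ℝ))) * 1 := by
          apply mul_le_mul_of_nonneg_right (mul_le_mul_of_nonneg_right hfac (by positivity)) zero_le_one
      _ = 2 * r ^ (k+1) := by
          have hfne : ((k+1).factorial : ℝ) ≠ 0 := Nat.cast_ne_zero.mpr (Nat.factorial_ne_zero _)
          rw [hr_def, div_pow]
          field_simp
  have hgsum : Summable (fun k : ℕ => 2 * r ^ (k + 1)) := by
    apply Summable.mul_left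
    exact (summable_geometric_of_lt_one hr0 hr1).comp_injective (add_left_injective 1)
  have hsumnorm : Summable (fun k : ℕ =>
      ‖((k : ℂ) + 2) * rabA α γ β (k + 1) * z ^ (k + 1)‖) :=
    Summable.of_nonneg_of_le (fun k => norm_nonneg _) hterm hgsum
  have hsumnorm' : Summable (fun k : ℕ =>
      ‖((k : ℂ) + 2) * rabA α γ β (k + 1) * z ^ (k + 1)‖) := by
    exact hsumnorm
  have hbound : ‖∑' k : ℕ, ((k : ℂ) + 2) * rabA α γ β (k + 1) * z ^ (k + 1)‖
      ≤ ∑' k : ℕ, 2 * r ^ (k + 1) := by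
    refine le_trans (norm_tsum_le_tsum_norm hsumnorm') (Summable.tsum_le_tsum ?_ hsumnorm' hgsum)
    intro k
    exact hterm k
  have hgeo : ∑' k : ℕ, 2 * r ^ (k + 1) = 2 * r / (1 - r) := by
    have : ∑' k : ℕ, 2 * r ^ (k + 1) = 2 * r * ∑' k : ℕ, r ^ k := by
      rw [← tsum_mul_left]
      congr 1; funext k; rw [pow_succ]; ring
    rw [this, tsum_geometric_of_lt_one hr0 hr1]
    field_simp
  rw [rabD]
  calc ‖1 + ∑' k : ℕ, ((k : ℂ) + 2) * rabA α γ β (k + 1) * z ^ (k + 1)‖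
      ≤ ‖1‖ + ‖∑' k : ℕ, ((k : ℂ) + 2) * rabA α γ β (k + 1) * z ^ (k + 1)‖ :=
        norm_add_le _ _
    _ ≤ 1 + 2 * r / (1 - r) := by rw [norm_one, ← hgeo]; linarith [hbound]
    _ = (c + b) / (c - b) := by
        have hcb : (0:ℝ) < c - b := by linarith
        have h1 : (1:ℝ) - r = (c - b) / c := by rw [hr_def]; field_simp
        rw [h1, hr_def]
        field_simp
        ring
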